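/- arXiv:1412.0995 — 6 statements merged into one kernel-verified Lean document; each statement's English description precedes it below -/
import Mathlib

section
/- For every complex number x such that either x has nonzero imaginary part or its real part lies outside [-1,1], the equation (d + 1/d)/2 = x in the unknown d has exactly two roots d₊ and d₋, satisfying |d₋| < 1 and |d₊| > 1. -/
/-- For every complex `x` with nonzero imaginary part or real part
outside `[-1,1]`, the equation `(d + 1/d)/2 = x` (equivalently `d² - 2xd + 1 = 0`)
has exactly two roots `d₊`, `d₋` with `|d₋| < 1` and `|d₊| > 1`. -/
theorem stmt_0 (x : ℂ) (hx : x.im ≠ 0 ∨ x.re ∉ Set.Icc (-1 : ℝ) 1) :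
    ∃ dp dm : ℂ, dp ≠ dm ∧ ‖dm‖ < 1 ∧ 1 < ‖dp‖ ∧
      (∀ d : ℂ, d ≠ 0 → ((d + 1 / d) / 2 = x ↔ d = dp ∨ d = dm)) := by
  obtain ⟨s, hs⟩ : ∃ s : ℂ, s ^ 2 = x ^ 2 - 1 :=
    IsAlgClosed.exists_pow_nat_eq (x ^ 2 - 1) (by norm_num)
  set a := x + s with ha
  set b := x - s with hb
  have hab : a * b = 1 := by
    have h1 : a * b = x ^ 2 - s ^ 2 := by rw [ha, hb]; ring
    rw [h1, hs]; ring
  have ha0 : a ≠ 0 := left_ne_zero_of_mul_eq_one hab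
  have hb0 : b ≠ 0 := right_ne_zero_of_mul_eq_one hab
  have hne : a ≠ b := by
    intro h
    have hs0 : s = 0 := by
      have h2 : x + s = x - s := by rw [← ha, ← hb, h]
      have : (2 : ℂ) * s = 0 := by linear_combination h2
      simpa using this
    have hx2 : x ^ 2 = 1 := by rw [← sub_eq_zero, ← hs, hs0]; ring
    have : (x - 1) * (x + 1) = 0 := by linear_combination hx2
    rcases mul_eq_zero.1 this with h1 | h1
    · have hx1 : x = 1 := sub_eq_zero.1 h1
      rcases hx with him | hre
      · rw [hx1] at him; norm_num at him
      · rw [hx1] at hre; norm_num at hre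
    · have hx1 : x = -1 := eq_neg_of_add_eq_zero_left h1
      rcases hx with him | hre
      · rw [hx1] at him; norm_num at him
      · rw [hx1] at hre; norm_num at hre
  have habs1 : ‖a‖ ≠ 1 := by
    intro h1
    have hconj : a * (starRingEnd ℂ) a = 1 := by
      rw [Complex.mul_conj]
      rw [← Complex.sq_norm, h1]; norm_num
    have hbconj : b = (starRingEnd ℂ) a := mul_left_cancel₀ ha0 (hab.trans hconj.symm)
    have hxre : x = (a.re : ℂ) := by
      have h2 : (2 : ℂ) * x = a + b := by rw [ha, hb]; ring
      rw [hbconj, Complex.add_conj] at h2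
      field_simp at h2
      push_cast at h2
      linear_combination h2 / 2
    rcases hx with him | hre
    · rw [hxre] at him; simp at him
    · apply hre
      rw [hxre]
      simp only [Complex.ofReal_re, Set.mem_Icc]
      constructor
      · have := Complex.abs_re_le_norm a; rw [h1] at this
        cases abs_le.1 this; linarith
      · have := Complex.abs_re_le_norm a; rw [h1] at this
        cases abs_le.1 this; linarith
  have hprod : ‖a‖ * ‖b‖ = 1 := by
    rw [← norm_mul, hab, norm_one]
  have key : ∀ d : ℂ, d ≠ 0 → ((d + 1 / d) / 2 = x ↔ d = a ∨ d = b) := by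
    intro d hd
    constructor
    · intro h
      have h2 : d ^ 2 - 2 * x * d + 1 = 0 := by
        field_simp at h
        linear_combination h
      have h3 : (d - a) * (d - b) = 0 := by
        rw [ha, hb]
        linear_combination h2 - hs
      rcases mul_eq_zero.1 h3 with h4 | h4
      · left; exact sub_eq_zero.1 h4
      · right; exact sub_eq_zero.1 h4
    · have h1a : 1 / a = b := by
        field_simp
        linear_combination hab + 2 * hs
      have h1b : 1 / b = a := by
        field_simp
        linear_combination hab + 2 * hs
      intro h
      rcases h with h | h <;> subst h
      · rw [h1a, ha, hb]; ring
      · rw [h1b, ha, hb]; ring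
  rcases lt_or_gt_of_ne habs1 with hlt | hgt
  · refine ⟨b, a, hne.symm, hlt, ?_, ?_⟩
    · by_contra h
      push_neg at h
      linarith [mul_le_of_le_one_right (norm_nonneg a) h, hprod.ge, hprod.le]
    · intro d hd; rw [key d hd]; tauto
  · refine ⟨a, b, hne, ?_, hgt, fun d hd => key d hd⟩
    by_contra h
    push_neg at h
    have : (1 : ℝ) < ‖a‖ * ‖b‖ := by
      nlinarith [norm_nonneg b]
    rw [hprod] at this; exact lt_irrefl 1 this
end

section
/- Let N, h be positive integers with N - h - 1 ≥ h ≥ 1 and ρ real with 0 < |ρ| < 1. Then the quadratic Q₂(x) = -(4hρ²/(1+ρ²))x² - 2(N-2h-1)ρx + (N-h-1)(1+ρ²) + 1-ρ² has discriminant Δ = 4(N-2h-1)²ρ² + 4·(4hρ²/(1+ρ²))·[(N-h-1)(1+ρ²)+1-ρ²] satisfying Δ > 4ρ²(N-1)². -/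
/-- For positive integers `N, h` with `N - h - 1 ≥ h ≥ 1` and real
`ρ` with `0 < |ρ| < 1`, the discriminant
`Δ = 4(N-2h-1)²ρ² + 4·(4hρ²/(1+ρ²))·[(N-h-1)(1+ρ²)+1-ρ²]`
of the quadratic `Q₂` satisfies `Δ > 4ρ²(N-1)²`. -/
theorem stmt_5 (N h : ℕ) (hh : 1 ≤ h) (hNh : (h : ℝ) ≤ (N : ℝ) - h - 1)
    (ρ : ℝ) (hρ0 : 0 < |ρ|) (hρ1 : |ρ| < 1) :
    4 * ((N : ℝ) - 2 * h - 1) ^ 2 * ρ ^ 2 +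
        4 * (4 * h * ρ ^ 2 / (1 + ρ ^ 2)) *
          (((N : ℝ) - h - 1) * (1 + ρ ^ 2) + 1 - ρ ^ 2) >
      4 * ρ ^ 2 * ((N : ℝ) - 1) ^ 2 := by
  have hρne : ρ ≠ 0 := abs_pos.mp hρ0
  have ht0 : 0 < ρ ^ 2 := by positivity
  have ht1 : ρ ^ 2 < 1 := by
    have := sq_abs ρ
    nlinarith
  have hd : (0 : ℝ) < 1 + ρ ^ 2 := by positivity
  have hh' : (1 : ℝ) ≤ (h : ℝ) := by exact_mod_cast hh
  rw [gt_iff_lt, ← sub_pos]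
  have key : 4 * ((N : ℝ) - 2 * h - 1) ^ 2 * ρ ^ 2 +
        4 * (4 * h * ρ ^ 2 / (1 + ρ ^ 2)) *
          (((N : ℝ) - h - 1) * (1 + ρ ^ 2) + 1 - ρ ^ 2) -
      4 * ρ ^ 2 * ((N : ℝ) - 1) ^ 2 = 16 * h * ρ ^ 2 * (1 - ρ ^ 2) / (1 + ρ ^ 2) := by
    field_simp
    ring
  rw [key]
  have hhpos : (0 : ℝ) < (h : ℝ) := by linarith
  apply div_pos _ hd
  have h1 : (0:ℝ) < 1 - ρ ^ 2 := by linarith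
  positivity
end

section
/- Let x₋ < x₊ be the two real roots of Q₂ as above and set d₁ = x₋ + √(x₋² - 1) and d₂ = x₊ - √(x₊² - 1) (these are the roots of modulus < 1 associated to x₋ and x₊). Then ρ(d₁ + d₂) ≥ 0. -/
set_option maxHeartbeats 1000000 in
private lemma g_anti {a b : ℝ} (ha : 1 ≤ a) (hab : a ≤ b) :
    b - Real.sqrt (b ^ 2 - 1) ≤ a - Real.sqrt (a ^ 2 - 1) := by
  have hb : 1 ≤ b := le_trans ha hab
  have ha2 : (0:ℝ) ≤ a ^ 2 - 1 := by nlinarith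
  have hb2 : (0:ℝ) ≤ b ^ 2 - 1 := by nlinarith
  set sa := Real.sqrt (a ^ 2 - 1) with hsa
  set sb := Real.sqrt (b ^ 2 - 1) with hsb
  have hsa2 : sa ^ 2 = a ^ 2 - 1 := Real.sq_sqrt ha2
  have hsb2 : sb ^ 2 = b ^ 2 - 1 := Real.sq_sqrt hb2
  have hsa0 : 0 ≤ sa := Real.sqrt_nonneg _
  have hsb0 : 0 ≤ sb := Real.sqrt_nonneg _
  have hsasb : sa ≤ sb := Real.sqrt_le_sqrt (by nlinarith)
  have hpa : 0 < a + sa := by linarith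
  have hpb : 0 < b + sb := by linarith
  have h1 : (a - sa) * (a + sa) = 1 := by nlinarith
  have h2 : (b - sb) * (b + sb) = 1 := by nlinarith
  have : (b - sb) * (a + sa) ≤ (b - sb) * (b + sb) := by
    have hbs : 0 ≤ b - sb := by
      by_contra hc
      push_neg at hc
      nlinarith
    nlinarith
  rw [h2, ← h1] at this
  exact le_of_mul_le_mul_right this hpa

set_option maxHeartbeats 1000000 in
/-- If `x₋ < x₊` are the two real roots of `Q₂` (both of absolute
value `> 1`), and `d₁ = x₋ + √(x₋²-1)`, `d₂ = x₊ - √(x₊²-1)`, then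
`ρ(d₁ + d₂) ≥ 0`. -/
theorem stmt_7 (N h : ℕ) (hh : 1 ≤ h) (hNh : (h : ℝ) ≤ (N : ℝ) - h - 1)
    (ρ : ℝ) (hρ0 : 0 < |ρ|) (hρ1 : |ρ| < 1) (xm xp : ℝ)
    (hroot_m : -(4 * h * ρ ^ 2 / (1 + ρ ^ 2)) * xm ^ 2 -
        2 * ((N : ℝ) - 2 * h - 1) * ρ * xm +
        ((N : ℝ) - h - 1) * (1 + ρ ^ 2) + 1 - ρ ^ 2 = 0)
    (hroot_p : -(4 * h * ρ ^ 2 / (1 + ρ ^ 2)) * xp ^ 2 -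
        2 * ((N : ℝ) - 2 * h - 1) * ρ * xp +
        ((N : ℝ) - h - 1) * (1 + ρ ^ 2) + 1 - ρ ^ 2 = 0)
    (hlt : xm < xp) (hm1 : 1 < |xm|) (hp1 : 1 < |xp|) :
    0 ≤ ρ * ((xm + Real.sqrt (xm ^ 2 - 1)) + (xp - Real.sqrt (xp ^ 2 - 1))) := by
  have hρne : ρ ≠ 0 := by
    intro hc; rw [hc, abs_zero] at hρ0; exact lt_irrefl 0 hρ0
  have hρsq : 0 < ρ ^ 2 := by positivity
  have hden : (0:ℝ) < 1 + ρ ^ 2 := by positivity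
  have hh1 : (1:ℝ) ≤ (h:ℝ) := by exact_mod_cast hh
  have hρ1' : ρ ^ 2 < 1 := by
    have := sq_abs ρ
    nlinarith [sq_nonneg (|ρ| - 1)]
  -- Clear denominators in root equations
  have hm' : -(4 * h * ρ ^ 2) * xm ^ 2 - 2 * ((N : ℝ) - 2 * h - 1) * ρ * xm * (1 + ρ ^ 2) +
      (((N : ℝ) - h - 1) * (1 + ρ ^ 2) + 1 - ρ ^ 2) * (1 + ρ ^ 2) = 0 := by
    have hAe : 4 * h * ρ ^ 2 / (1 + ρ ^ 2) * (1 + ρ ^ 2) = 4 * h * ρ ^ 2 :=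
      div_mul_cancel₀ _ hden.ne'
    linear_combination (1 + ρ ^ 2) * hroot_m + xm ^ 2 * hAe
  have hp' : -(4 * h * ρ ^ 2) * xp ^ 2 - 2 * ((N : ℝ) - 2 * h - 1) * ρ * xp * (1 + ρ ^ 2) +
      (((N : ℝ) - h - 1) * (1 + ρ ^ 2) + 1 - ρ ^ 2) * (1 + ρ ^ 2) = 0 := by
    have hAe : 4 * h * ρ ^ 2 / (1 + ρ ^ 2) * (1 + ρ ^ 2) = 4 * h * ρ ^ 2 :=
      div_mul_cancel₀ _ hden.ne'
    linear_combination (1 + ρ ^ 2) * hroot_p + xp ^ 2 * hAe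
  -- Vieta sum: 4hρ²(xm+xp) = -2(N-2h-1)ρ(1+ρ²)
  have hsum : 4 * h * ρ ^ 2 * (xm + xp) = -(2 * ((N : ℝ) - 2 * h - 1) * ρ * (1 + ρ ^ 2)) := by
    have hne : xm - xp ≠ 0 := by intro hc; linarith [sub_eq_zero.mp hc]
    have key : (xm - xp) * (4 * h * ρ ^ 2 * (xm + xp) + 2 * ((N : ℝ) - 2 * h - 1) * ρ * (1 + ρ ^ 2)) = 0 := by
      linear_combination hp' - hm' 
    rcases mul_eq_zero.mp key with hc | hc
    · exact absurd hc hne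
    · linarith
  -- C > 0
  have hC : (0:ℝ) < ((N : ℝ) - h - 1) * (1 + ρ ^ 2) + 1 - ρ ^ 2 := by
    nlinarith [mul_le_mul_of_nonneg_right (le_trans hh1 hNh) hden.le]
  -- product: 4hρ² * xm * xp = -C(1+ρ²)
  have hprod : 4 * h * ρ ^ 2 * (xm * xp) =
      -((((N : ℝ) - h - 1) * (1 + ρ ^ 2) + 1 - ρ ^ 2) * (1 + ρ ^ 2)) := by
    linear_combination hm' + xm * hsum
  have hA : (0:ℝ) < 4 * h * ρ ^ 2 := by positivity
  have hprodneg : xm * xp < 0 := by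
    by_contra hc
    push_neg at hc
    nlinarith [mul_nonneg hA.le hc, mul_pos hC hden]
  have hxm_neg : xm < 0 := by nlinarith
  have hxp_pos : 0 < xp := by nlinarith
  have hxm : xm < -1 := by
    have := abs_of_neg hxm_neg
    linarith [hm1.le.trans_eq this.symm.symm, (this ▸ hm1 : (1:ℝ) < -xm)]
  have hxp : 1 < xp := by
    have := abs_of_pos hxp_pos
    linarith [(this ▸ hp1 : (1:ℝ) < xp)]
  -- sign of ρ(xm+xp)
  have hN2h : (0:ℝ) ≤ (N:ℝ) - 2*h - 1 := by linarith
  have hρs : ρ * (xm + xp) ≤ 0 := by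
    have h1 : 4 * h * ρ ^ 2 * (ρ * (xm + xp)) = -(2 * ((N : ℝ) - 2 * h - 1) * ρ ^ 2 * (1 + ρ ^ 2)) := by
      linear_combination ρ * hsum
    have hRHS : 0 ≤ 2 * ((N : ℝ) - 2 * h - 1) * ρ ^ 2 * (1 + ρ ^ 2) :=
      mul_nonneg (mul_nonneg (by linarith) hρsq.le) hden.le
    by_contra hc
    push_neg at hc
    nlinarith [mul_pos hA hc]
  rcases lt_or_gt_of_ne hρne with hneg | hpos
  · -- ρ < 0 : xm + xp ≥ 0, so -xm ≤ xp, d₁+d₂ ≤ 0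
    have hs : 0 ≤ xm + xp := by
      by_contra hc; push_neg at hc; nlinarith
    have hab : -xm ≤ xp := by linarith
    have := g_anti (a := -xm) (b := xp) (by linarith) hab
    have h2 : (-xm) ^ 2 = xm ^ 2 := by ring
    rw [h2] at this
    have hd : (xm + Real.sqrt (xm ^ 2 - 1)) + (xp - Real.sqrt (xp ^ 2 - 1)) ≤ 0 := by
      linarith
    nlinarith [mul_nonneg (neg_nonneg.2 hneg.le) (neg_nonneg.2 hd)]
  · -- ρ > 0 : xm + xp ≤ 0, so xp ≤ -xm, d₁+d₂ ≥ 0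
    have hs : xm + xp ≤ 0 := by
      by_contra hc; push_neg at hc; nlinarith
    have hab : xp ≤ -xm := by linarith
    have := g_anti (a := xp) (b := -xm) hxp.le hab
    have hd : 0 ≤ (xm + Real.sqrt (xm ^ 2 - 1)) + (xp - Real.sqrt (xp ^ 2 - 1)) := by
      have h2 : (-xm)^2 = xm^2 := by ring
      rw [h2] at this
      linarith
    exact mul_nonneg hpos.le hd
end

section
/- Let ρ ∈ ℝ with 0 < |ρ| < 1 and d₁, d₂ real with |d₁| < 1, |d₂| < 1 and ρ(d₁+d₂) ≥ 0 and d₁ < 0 < d₂. Let N, h satisfy N - h - 1 ≥ h ≥ 1. Then the quantity s(d₁,d₂) = (1+ρ²)[(N-1)(1-d₁ρ)(1-d₂ρ) + (1-ρ²)(1+d₁d₂ρ²)] + h(1-d₁ρ)(1-d₂ρ)(-1 + (d₁+d₂)ρ + d₁d₂ρ² - 2ρ²) is strictly positive. -/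
/-- Positivity of `s(d₁,d₂)`. -/
theorem stmt_8 (N h : ℕ) (hh : 1 ≤ h) (hNh : (h : ℝ) ≤ (N : ℝ) - h - 1)
    (ρ : ℝ) (hρ0 : 0 < |ρ|) (hρ1 : |ρ| < 1) (d₁ d₂ : ℝ)
    (hd₁ : |d₁| < 1) (hd₂ : |d₂| < 1) (hsum : 0 ≤ ρ * (d₁ + d₂))
    (hsign : d₁ < 0 ∧ 0 < d₂) :
    0 < (1 + ρ ^ 2) * (((N : ℝ) - 1) * (1 - d₁ * ρ) * (1 - d₂ * ρ) +
          (1 - ρ ^ 2) * (1 + d₁ * d₂ * ρ ^ 2)) +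
        h * (1 - d₁ * ρ) * (1 - d₂ * ρ) *
          (-1 + (d₁ + d₂) * ρ + d₁ * d₂ * ρ ^ 2 - 2 * ρ ^ 2) := by
  obtain ⟨hρl, hρr⟩ := abs_lt.mp hρ1
  obtain ⟨h1l, h1r⟩ := abs_lt.mp hd₁
  obtain ⟨h2l, h2r⟩ := abs_lt.mp hd₂
  have hρ2 : ρ ^ 2 < 1 := by nlinarith
  have hA1 : 0 < 1 - d₁ * ρ := by nlinarith
  have hA2 : 0 < 1 - d₂ * ρ := by nlinarith
  have hA : 0 < (1 - d₁ * ρ) * (1 - d₂ * ρ) := mul_pos hA1 hA2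
  have hB : 0 < 1 + d₁ * d₂ * ρ ^ 2 := by nlinarith [sq_nonneg ρ, mul_pos hsign.2 (neg_pos.mpr hsign.1)]
  have hhr : (1 : ℝ) ≤ (h : ℝ) := by exact_mod_cast hh
  have hN : 2 * (h : ℝ) ≤ (N : ℝ) - 1 := by linarith
  nlinarith [mul_nonneg (mul_nonneg (by nlinarith : (0:ℝ) ≤ (1 + ρ^2)) (by linarith : (0:ℝ) ≤ (N:ℝ) - 1 - 2*h)) hA.le,
    mul_pos (mul_pos (by nlinarith : (0:ℝ) < 1 + ρ^2) (by linarith : (0:ℝ) < 1 - ρ^2)) hB,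
    mul_pos (mul_pos (by linarith : (0:ℝ) < (h:ℝ)) hA) hB,
    mul_nonneg (mul_nonneg (by linarith : (0:ℝ) ≤ (h:ℝ)) hA.le) hsum]
end

section
/- Let H_m(d) = D_m⁻¹ R_m D_m be the tridiagonal matrix as above (with R_m invertible) and let T_m(x) be the m×m symmetric Toeplitz matrix whose (i,j) entry is T_{|i-j|}(x), the Chebyshev polynomial of the first kind of degree |i-j| evaluated at x = (d + d⁻¹)/2. Then 𝟙ᵀ H_m(d)⁻¹ 𝟙 = tr(T_m(x) R_m⁻¹). -/
open Matrix

lemma cheb_eval_nat (d : ℂ) (hd : d ≠ 0) : ∀ n : ℕ,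
    (Polynomial.Chebyshev.T ℂ (n : ℤ)).eval ((d + d⁻¹) / 2)
      = (d ^ n + d⁻¹ ^ n) / 2 := by
  intro n
  induction n using Nat.twoStepInduction with
  | zero => norm_num [Polynomial.Chebyshev.T_zero]
  | one => norm_num [Polynomial.Chebyshev.T_one]
  | more n ih1 ih2 =>
    have h2 : ((n + 2 : ℕ) : ℤ) = (n : ℤ) + 2 := by push_cast; ring
    rw [h2, Polynomial.Chebyshev.T_add_two]
    have h1 : ((n + 1 : ℕ) : ℤ) = (n : ℤ) + 1 := by push_cast; ring
    rw [h1] at ih2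
    simp only [Polynomial.eval_sub, Polynomial.eval_mul, Polynomial.eval_ofNat,
      Polynomial.eval_X, ih1, ih2]
    have h1 : d * d⁻¹ = 1 := mul_inv_cancel₀ hd
    linear_combination ((d⁻¹ ^ n + d ^ n) / 2) * h1

lemma cheb_eval_int (d : ℂ) (hd : d ≠ 0) (k : ℤ) :
    (Polynomial.Chebyshev.T ℂ (k.natAbs : ℤ)).eval ((d + d⁻¹) / 2)
      = (d ^ k + d ^ (-k)) / 2 := by
  have helper : ∀ n : ℕ, ((d : ℂ) ^ n + d⁻¹ ^ n) / 2
      = (d ^ (n : ℤ) + d ^ (-(n : ℤ))) / 2 := by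
    intro n
    rw [_root_.zpow_neg d (n : ℤ), zpow_natCast d n, inv_pow]
  rw [cheb_eval_nat d hd]
  rcases Int.natAbs_eq k with h | h
  · conv_rhs => rw [h]
    exact helper k.natAbs
  · conv_rhs => rw [h]
    rw [neg_neg, add_comm (d ^ (-(k.natAbs : ℤ)))]
    exact helper k.natAbs

/-- With `H_m(d) = D_m⁻¹ R_m D_m` and `T_m(x)` the Toeplitz
matrix of Chebyshev polynomials at `x = (d+1/d)/2`, one has
`𝟙ᵀ H_m(d)⁻¹ 𝟙 = tr(T_m(x) R_m⁻¹)`. -/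
theorem stmt_14 (m : ℕ) (hm : 0 < m) (d : ℂ) (hd : d ≠ 0) (ρ : ℝ)
    (hρ0 : 0 < |ρ|) (hρ1 : |ρ| < 1)
    (R : Matrix (Fin m) (Fin m) ℂ)
    (hR : ∀ i j : Fin m, R i j =
      if (i : ℕ) = (j : ℕ) then 1 + (ρ : ℂ) ^ 2
      else if (i : ℕ) + 1 = (j : ℕ) ∨ (j : ℕ) + 1 = (i : ℕ) then -(ρ : ℂ) else 0) :
    let D : Matrix (Fin m) (Fin m) ℂ := Matrix.diagonal fun i => d ^ (i : ℕ)
    let H : Matrix (Fin m) (Fin m) ℂ := D⁻¹ * R * D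
    let x : ℂ := (d + d⁻¹) / 2
    let T : Matrix (Fin m) (Fin m) ℂ :=
      Matrix.of fun i j =>
        (Polynomial.Chebyshev.T ℂ (((i : ℤ) - (j : ℤ)).natAbs : ℤ)).eval x
    (fun _ : Fin m => (1 : ℂ)) ⬝ᵥ (H⁻¹ *ᵥ fun _ => (1 : ℂ)) =
      Matrix.trace (T * R⁻¹) := by
  intro D H x T
  -- R is symmetric, hence so is R⁻¹
  have hRsym : Rᵀ = R := by
    ext i j
    simp only [Matrix.transpose_apply]
    rw [hR, hR]
    by_cases h : (i : ℕ) = (j : ℕ)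
    · simp [h]
    · simp only [h, Ne.symm h, if_false]
      exact if_congr or_comm rfl rfl
  have hSsym : ∀ i j : Fin m, R⁻¹ j i = R⁻¹ i j := by
    intro i j
    have h := Matrix.transpose_nonsing_inv R
    rw [hRsym] at h
    calc R⁻¹ j i = (R⁻¹)ᵀ i j := rfl
      _ = R⁻¹ i j := by rw [h]
  -- D is invertible
  have hDdet : IsUnit (D.det) := by
    rw [Matrix.det_diagonal]
    exact (Finset.prod_ne_zero_iff.mpr fun i _ => pow_ne_zero _ hd).isUnit
  -- H⁻¹ = D⁻¹ * (R⁻¹ * D)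
  have hHinv : H⁻¹ = D⁻¹ * (R⁻¹ * D) := by
    show (D⁻¹ * R * D)⁻¹ = _
    rw [Matrix.mul_inv_rev, Matrix.mul_inv_rev, Matrix.nonsing_inv_nonsing_inv D hDdet]
  have hDinv : D⁻¹ = Matrix.diagonal fun i : Fin m => (d ^ (i : ℕ))⁻¹ := by
    apply Matrix.inv_eq_right_inv
    rw [show D = Matrix.diagonal fun i : Fin m => d ^ (i : ℕ) from rfl,
      Matrix.diagonal_mul_diagonal]
    convert Matrix.diagonal_one with i
    exact mul_inv_cancel₀ (pow_ne_zero _ hd)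
  -- entrywise formula for H⁻¹
  have hent : ∀ i j : Fin m, H⁻¹ i j = d ^ ((j : ℤ) - (i : ℤ)) * R⁻¹ i j := by
    intro i j
    rw [hHinv, hDinv, Matrix.diagonal_mul, Matrix.mul_diagonal]
    rw [zpow_sub₀ hd, zpow_natCast, zpow_natCast]
    field_simp
  -- entrywise formula for T
  have hT : ∀ i j : Fin m,
      T i j = (d ^ ((i : ℤ) - (j : ℤ)) + d ^ ((j : ℤ) - (i : ℤ))) / 2 := by
    intro i j
    show (Polynomial.Chebyshev.T ℂ ((((i : ℤ) - (j : ℤ))).natAbs : ℤ)).eval x = _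
    rw [cheb_eval_int d hd ((i : ℤ) - (j : ℤ))]
    rw [neg_sub]
  have hswap : ∑ i : Fin m, ∑ j : Fin m, d ^ ((i : ℤ) - (j : ℤ)) * R⁻¹ i j
      = ∑ i : Fin m, ∑ j : Fin m, d ^ ((j : ℤ) - (i : ℤ)) * R⁻¹ i j := by
    rw [Finset.sum_comm]
    exact Finset.sum_congr rfl fun j _ => Finset.sum_congr rfl fun i _ => by
      rw [hSsym]
  calc (fun _ : Fin m => (1 : ℂ)) ⬝ᵥ (H⁻¹ *ᵥ fun _ => (1 : ℂ))
      = ∑ i : Fin m, ∑ j : Fin m, d ^ ((j : ℤ) - (i : ℤ)) * R⁻¹ i j := by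
        simp only [dotProduct, Matrix.mulVec, one_mul, mul_one]
        exact Finset.sum_congr rfl fun i _ => Finset.sum_congr rfl fun j _ => by
          rw [hent]
    _ = ∑ i : Fin m, ∑ j : Fin m,
          ((d ^ ((i : ℤ) - (j : ℤ)) + d ^ ((j : ℤ) - (i : ℤ))) / 2) * R⁻¹ i j := by
        have expand : ∑ i : Fin m, ∑ j : Fin m,
            ((d ^ ((i : ℤ) - (j : ℤ)) + d ^ ((j : ℤ) - (i : ℤ))) / 2) * R⁻¹ i j
            = (∑ i : Fin m, ∑ j : Fin m, d ^ ((i : ℤ) - (j : ℤ)) * R⁻¹ i j) / 2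
              + (∑ i : Fin m, ∑ j : Fin m, d ^ ((j : ℤ) - (i : ℤ)) * R⁻¹ i j) / 2 := by
          simp only [add_mul, add_div, div_mul_eq_mul_div,
            Finset.sum_add_distrib, Finset.sum_div]
        rw [expand, hswap]
        ring
    _ = ∑ i : Fin m, ∑ j : Fin m, T i j * R⁻¹ j i := by
        exact Finset.sum_congr rfl fun i _ => Finset.sum_congr rfl fun j _ => by
          rw [hT, hSsym]
    _ = Matrix.trace (T * R⁻¹) := by
        simp only [Matrix.trace, Matrix.diag, Matrix.mul_apply]
end

section
/- Let C be the nilpotent N×N matrix with ρ on the superdiagonal (ρ real, |ρ| < 1), and define the operator 𝔻 = Id + Σ_{k=1}^{N-1}(C^k 𝕃^k + (Cᵀ)^k ℝᵢₜ^k) on sequences of vectors in ℝᴺ. Then 𝔻 is invertible with inverse 𝔻⁻¹ = (Id - Cᵀ ℝᵢₜ) ∘ D ∘ (Id - C 𝕃), where D = (I - C Cᵀ)⁻¹ acts entrywise on sequences. -/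
open Matrix

/-- Left shift on sequences of vectors in `ℝᴺ`. -/
def leftShift {N : ℕ} (s : ℕ → (Fin N → ℝ)) : ℕ → (Fin N → ℝ) :=
  fun n => s (n + 1)

/-- Right shift (prepending the zero vector) on sequences of vectors in `ℝᴺ`. -/
def rightShift {N : ℕ} (s : ℕ → (Fin N → ℝ)) : ℕ → (Fin N → ℝ) :=
  fun n => match n with
  | 0 => 0
  | n + 1 => s n

/-- A matrix acting entrywise on a sequence of vectors. -/
def matAct {N : ℕ} (A : Matrix (Fin N) (Fin N) ℝ) (s : ℕ → (Fin N → ℝ)) :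
    ℕ → (Fin N → ℝ) :=
  fun n => A *ᵥ s n

lemma leftShift_iterate {N : ℕ} (s : ℕ → Fin N → ℝ) (k n : ℕ) :
    leftShift^[k] s n = s (n + k) := by
  induction k generalizing s n with
  | zero => rfl
  | succ k ih =>
    rw [Function.iterate_succ_apply, ih]
    show s (n + k + 1) = s (n + (k + 1))
    congr 1

lemma rightShift_iterate_succ {N : ℕ} (s : ℕ → Fin N → ℝ) (k n : ℕ) :
    rightShift^[k+1] s (n+1) = rightShift^[k] s n := by
  rw [Function.iterate_succ_apply']; rfl

lemma rightShift_iterate_zero {N : ℕ} (s : ℕ → Fin N → ℝ) (k : ℕ) :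
    rightShift^[k+1] s 0 = 0 := by
  rw [Function.iterate_succ_apply']; rfl

lemma rightShift_sub {N : ℕ} (a b : ℕ → Fin N → ℝ) :
    rightShift (a - b) = rightShift a - rightShift b := by
  funext n
  cases n with
  | zero => simp [rightShift]
  | succ n => rfl

lemma rightShift_iterate_sub {N : ℕ} (a b : ℕ → Fin N → ℝ) (k : ℕ) :
    rightShift^[k] (a - b) = rightShift^[k] a - rightShift^[k] b := by
  induction k with
  | zero => rfl
  | succ k ih =>
    rw [Function.iterate_succ_apply', ih, rightShift_sub,
      Function.iterate_succ_apply', Function.iterate_succ_apply']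

lemma matAct_rightShift {N : ℕ} (A : Matrix (Fin N) (Fin N) ℝ) (s : ℕ → Fin N → ℝ) :
    rightShift (matAct A s) = matAct A (rightShift s) := by
  funext n
  cases n with
  | zero => simp [rightShift, matAct]
  | succ n => rfl

lemma matAct_rightShift_iterate {N : ℕ} (A : Matrix (Fin N) (Fin N) ℝ)
    (s : ℕ → Fin N → ℝ) (k : ℕ) :
    rightShift^[k] (matAct A s) = matAct A (rightShift^[k] s) := by
  induction k with
  | zero => rfl
  | succ k ih =>
    rw [Function.iterate_succ_apply', ih, matAct_rightShift,
      Function.iterate_succ_apply']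

lemma mv_sum {N : ℕ} (A : Matrix (Fin N) (Fin N) ℝ) (t : Finset ℕ)
    (f : ℕ → Fin N → ℝ) : A *ᵥ (∑ k ∈ t, f k) = ∑ k ∈ t, A *ᵥ f k := by
  rw [← Matrix.mulVecLin_apply, map_sum]
  simp [Matrix.mulVecLin_apply]

/-- The operator `𝔻 = Id + Σ_{k=1}^{N-1}(C^k 𝕃^k + (Cᵀ)^k ℝᵢₜ^k)`
is invertible with inverse `(Id - Cᵀ ℝᵢₜ) ∘ D ∘ (Id - C 𝕃)`, where
`D = (I - C Cᵀ)⁻¹` acts entrywise. -/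
theorem stmt_18 (N : ℕ) (hN : 1 ≤ N) (ρ : ℝ) (hρ : |ρ| < 1)
    (C : Matrix (Fin N) (Fin N) ℝ)
    (hC : ∀ i j : Fin N, C i j = if (i : ℕ) + 1 = (j : ℕ) then ρ else 0) :
    let Dmat : Matrix (Fin N) (Fin N) ℝ := (1 - C * Cᵀ)⁻¹
    let 𝔻 : (ℕ → (Fin N → ℝ)) → (ℕ → (Fin N → ℝ)) := fun s =>
      s + ∑ k ∈ Finset.Icc 1 (N - 1),
        (matAct (C ^ k) (leftShift^[k] s) + matAct (Cᵀ ^ k) (rightShift^[k] s))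
    let 𝔻inv : (ℕ → (Fin N → ℝ)) → (ℕ → (Fin N → ℝ)) := fun s =>
      (fun t => t - matAct Cᵀ (rightShift t))
        (matAct Dmat ((fun t => t - matAct C (leftShift t)) s))
    (∀ s, 𝔻inv (𝔻 s) = s) ∧ (∀ s, 𝔻 (𝔻inv s) = s) := by
  intro Dmat 𝔻 𝔻inv
  obtain ⟨M, rfl⟩ : ∃ M, N = M + 1 := ⟨N - 1, (Nat.succ_pred_eq_of_pos hN).symm⟩
  -- range/Icc conversion
  have hIcc : ∀ (f : ℕ → Fin (M+1) → ℝ),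
      ∑ k ∈ Finset.Icc 1 (M+1-1), f k = (∑ k ∈ Finset.range (M+1), f k) - f 0 := by
    intro f
    have hr : Finset.range (M+1) = insert 0 (Finset.Icc 1 (M+1-1)) := by
      ext x; simp [Finset.mem_range, Finset.mem_Icc]; omega
    rw [hr, Finset.sum_insert (by simp)]
    abel
  have hCpow : ∀ k, ∀ i j : Fin (M+1),
      (C ^ k) i j = if (i:ℕ) + k = (j:ℕ) then ρ ^ k else 0 := by
    intro k
    induction k with
    | zero =>
      intro i j
      simp [Matrix.one_apply, Fin.ext_iff]
    | succ k ih =>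
      intro i j
      rw [pow_succ, Matrix.mul_apply]
      by_cases h : (i:ℕ) + (k+1) = (j:ℕ)
      · have hik : (i:ℕ) + k < M + 1 := by have := j.isLt; omega
        rw [Finset.sum_eq_single (⟨(i:ℕ)+k, hik⟩ : Fin (M+1))]
        · rw [ih, hC]
          simp only [if_pos rfl]
          rw [if_pos (by simpa using h), if_pos (show (i:ℕ)+k+1 = (j:ℕ) by omega), pow_succ,
            if_pos h]
        · intro b _ hb
          rw [ih, if_neg, zero_mul]
          intro hh
          exact hb (by simp [Fin.ext_iff, ← hh])
        · simp
      · rw [if_neg h]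
        apply Finset.sum_eq_zero
        intro b _
        rw [ih, hC]
        by_cases h1 : (i:ℕ) + k = (b:ℕ)
        · rw [if_pos h1, if_neg (by omega), mul_zero]
        · rw [if_neg h1, zero_mul]
  have hCN : C ^ (M+1) = 0 := by
    ext i j
    rw [hCpow, if_neg (by have := j.isLt; omega)]
    rfl
  have hCTN : Cᵀ ^ (M+1) = 0 := by
    rw [← Matrix.transpose_pow, hCN, Matrix.transpose_zero]
  have hρ2 : ρ^2 < 1 := by nlinarith [sq_abs ρ, abs_nonneg ρ]
  have hCCT : 1 - C * Cᵀ =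
      Matrix.diagonal (fun i : Fin (M+1) => if (i:ℕ)+1 < M+1 then 1-ρ^2 else 1) := by
    ext i j
    rw [Matrix.sub_apply, Matrix.mul_apply, Matrix.diagonal_apply, Matrix.one_apply]
    by_cases hij : i = j
    · subst hij
      rw [if_pos rfl, if_pos rfl]
      by_cases hi : (i:ℕ)+1 < M+1
      · rw [if_pos hi, Finset.sum_eq_single (⟨(i:ℕ)+1, hi⟩ : Fin (M+1))]
        · rw [Matrix.transpose_apply, hC]
          have hcond : ((i:ℕ) + 1 = ((⟨(i:ℕ)+1, hi⟩ : Fin (M+1)) : ℕ)) := rfl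
          rw [if_pos hcond]
          ring
        · intro b _ hb
          rw [hC, if_neg, zero_mul]
          intro hh
          exact hb (by simp [Fin.ext_iff, ← hh])
        · simp
      · rw [if_neg hi, Finset.sum_eq_zero, sub_zero]
        intro b _
        rw [hC, if_neg (by have := b.isLt; omega), zero_mul]
    · rw [if_neg hij, if_neg hij, Finset.sum_eq_zero, zero_sub, neg_zero]
      intro b _
      rw [hC, Matrix.transpose_apply, hC]
      by_cases h1 : (i:ℕ) + 1 = (b:ℕ)
      · rw [if_pos h1, if_neg, mul_zero]
        intro hh
        exact hij (by simp [Fin.ext_iff]; omega)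
      · rw [if_neg h1, zero_mul]
  have hdet : IsUnit (1 - C * Cᵀ).det := by
    rw [hCCT, Matrix.det_diagonal]
    rw [isUnit_iff_ne_zero]
    apply Finset.prod_ne_zero_iff.mpr
    intro i _
    split_ifs
    · intro hh; nlinarith
    · exact one_ne_zero
  have hD1 : (1 - C * Cᵀ)⁻¹ * (1 - C * Cᵀ) = 1 := Matrix.nonsing_inv_mul _ hdet
  have hD2 : (1 - C * Cᵀ) * (1 - C * Cᵀ)⁻¹ = 1 := Matrix.mul_nonsing_inv _ hdet
  have hCMD : C ^ M * (1 - C * Cᵀ)⁻¹ = C ^ M := by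
    have h0 : C ^ M * (1 - C * Cᵀ) = C ^ M := by
      rw [Matrix.mul_sub, mul_one, ← mul_assoc, ← pow_succ, hCN, Matrix.zero_mul, sub_zero]
    calc C^M * (1 - C * Cᵀ)⁻¹ = (C^M * (1 - C*Cᵀ)) * (1 - C * Cᵀ)⁻¹ := by rw [h0]
    _ = C^M * ((1-C*Cᵀ) * (1 - C * Cᵀ)⁻¹) := by rw [mul_assoc]
    _ = C^M := by rw [hD2, mul_one]
  -- 𝔻 pointwise in range form
  have hDs : ∀ (s : ℕ → Fin (M+1) → ℝ) (n : ℕ), 𝔻 s n =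
      (∑ k ∈ Finset.range (M+1), (C^k) *ᵥ s (n+k))
      + (∑ k ∈ Finset.range (M+1), (Cᵀ^k) *ᵥ (rightShift^[k] s) n) - s n := by
    intro s n
    show (s + ∑ k ∈ Finset.Icc 1 (M+1-1),
        (matAct (C ^ k) (leftShift^[k] s) + matAct (Cᵀ ^ k) (rightShift^[k] s))) n = _
    rw [Pi.add_apply, Finset.sum_apply]
    simp only [Pi.add_apply, matAct, leftShift_iterate]
    rw [hIcc (fun k => (C^k) *ᵥ s (n+k) + (Cᵀ^k) *ᵥ (rightShift^[k] s) n),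
      Finset.sum_add_distrib]
    simp only [pow_zero, Matrix.one_mulVec, Function.iterate_zero, id_eq, Nat.add_zero]
    abel
  -- telescoping for the left-shift part
  have hA : ∀ (s : ℕ → Fin (M+1) → ℝ) (n : ℕ),
      (∑ k ∈ Finset.range (M+1), (C^k) *ᵥ s (n+k))
        - C *ᵥ (∑ k ∈ Finset.range (M+1), (C^k) *ᵥ s (n+1+k)) = s n := by
    intro s n
    rw [mv_sum]
    have e1 : ∀ k ∈ Finset.range (M+1),
        C *ᵥ ((C^k) *ᵥ s (n+1+k)) = (C^(k+1)) *ᵥ s (n+(k+1)) := by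
      intro k _
      have harg : n+1+k = n+(k+1) := by omega
      rw [Matrix.mulVec_mulVec, ← pow_succ', harg]
    rw [Finset.sum_congr rfl e1]
    have e2 := Finset.sum_range_succ' (fun k => (C^k) *ᵥ s (n+k)) (M+1)
    have e3 := Finset.sum_range_succ (fun k => (C^k) *ᵥ s (n+k)) (M+1)
    rw [hCN, Matrix.zero_mulVec, add_zero] at e3
    rw [← e3, e2]
    simp only [pow_zero, Matrix.one_mulVec, Nat.add_zero]
    abel
  -- the right-shift sum
  have hB0 : ∀ (s : ℕ → Fin (M+1) → ℝ),
      (∑ k ∈ Finset.range (M+1), (Cᵀ^k) *ᵥ (rightShift^[k] s) 0) = s 0 := by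
    intro s
    rw [Finset.sum_range_succ' (fun k => (Cᵀ^k) *ᵥ (rightShift^[k] s) 0) M]
    rw [Finset.sum_eq_zero, zero_add]
    · simp
    · intro k _
      rw [rightShift_iterate_zero, Matrix.mulVec_zero]
  have hBsucc : ∀ (s : ℕ → Fin (M+1) → ℝ) (n : ℕ),
      (∑ k ∈ Finset.range (M+1), (Cᵀ^k) *ᵥ (rightShift^[k] s) (n+1)) =
      (∑ k ∈ Finset.range M, (Cᵀ^(k+1)) *ᵥ (rightShift^[k] s) n) + s (n+1) := by
    intro s n
    rw [Finset.sum_range_succ' (fun k => (Cᵀ^k) *ᵥ (rightShift^[k] s) (n+1)) M]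
    congr 1
    · apply Finset.sum_congr rfl
      intro k _
      rw [rightShift_iterate_succ]
    · simp
  have hBtail : ∀ (s : ℕ → Fin (M+1) → ℝ) (n : ℕ),
      (∑ k ∈ Finset.range M, (Cᵀ^(k+1)) *ᵥ (rightShift^[k] s) n) =
      Cᵀ *ᵥ (∑ k ∈ Finset.range (M+1), (Cᵀ^k) *ᵥ (rightShift^[k] s) n) := by
    intro s n
    rw [mv_sum]
    have e1 : ∀ k ∈ Finset.range (M+1),
        Cᵀ *ᵥ ((Cᵀ^k) *ᵥ (rightShift^[k] s) n) = (Cᵀ^(k+1)) *ᵥ (rightShift^[k] s) n := by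
      intro k _
      rw [Matrix.mulVec_mulVec, ← pow_succ']
    rw [Finset.sum_congr rfl e1, Finset.sum_range_succ, hCTN, Matrix.zero_mulVec, add_zero]
  -- direction 1 key identity
  have hu : ∀ (s : ℕ → Fin (M+1) → ℝ) (n : ℕ),
      𝔻 s n - C *ᵥ (𝔻 s) (n+1) =
      (1 - C * Cᵀ) *ᵥ (∑ k ∈ Finset.range (M+1), (Cᵀ^k) *ᵥ (rightShift^[k] s) n) := by
    intro s n
    rw [hDs s n, hDs s (n+1), Matrix.mulVec_sub, Matrix.mulVec_add,
      hBsucc s n, hBtail s n, Matrix.mulVec_add, Matrix.sub_mulVec, Matrix.one_mulVec,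
      ← Matrix.mulVec_mulVec]
    have ha := hA s n
    linear_combination ha
  constructor
  · -- left inverse
    intro s
    have hv : matAct Dmat ((𝔻 s) - matAct C (leftShift (𝔻 s))) =
        fun n => (∑ k ∈ Finset.range (M+1), (Cᵀ^k) *ᵥ (rightShift^[k] s) n) := by
      funext n
      show Dmat *ᵥ ((𝔻 s) n - C *ᵥ (𝔻 s) (n+1)) = _
      rw [hu, Matrix.mulVec_mulVec]
      show ((1 - C * Cᵀ)⁻¹ * (1 - C * Cᵀ)) *ᵥ _ = _
      rw [hD1, Matrix.one_mulVec]
    show matAct Dmat ((𝔻 s) - matAct C (leftShift (𝔻 s)))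
        - matAct Cᵀ (rightShift (matAct Dmat ((𝔻 s) - matAct C (leftShift (𝔻 s))))) = s
    rw [hv]
    funext n
    rw [Pi.sub_apply]
    cases n with
    | zero =>
      show _ - Cᵀ *ᵥ (0 : Fin (M+1) → ℝ) = s 0
      rw [Matrix.mulVec_zero, sub_zero, hB0]
    | succ n =>
      show _ - Cᵀ *ᵥ (∑ k ∈ Finset.range (M+1), (Cᵀ^k) *ᵥ (rightShift^[k] s) n) = s (n+1)
      rw [← hBtail, hBsucc]
      abel
  · -- right inverse
    intro s
    set v : ℕ → Fin (M+1) → ℝ := matAct Dmat (s - matAct C (leftShift s)) with hvdef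
    set t : ℕ → Fin (M+1) → ℝ := v - matAct Cᵀ (rightShift v) with htdef
    show 𝔻 t = s
    have hv1 : ∀ m, (1 - C * Cᵀ) *ᵥ v m = s m - C *ᵥ s (m+1) := by
      intro m
      rw [hvdef]
      simp only [matAct, Pi.sub_apply, leftShift]
      rw [Matrix.mulVec_mulVec]
      show ((1 - C*Cᵀ) * (1 - C*Cᵀ)⁻¹) *ᵥ _ = _
      rw [hD2, Matrix.one_mulVec]
    have hv2 : ∀ m, (C * Cᵀ) *ᵥ v m = v m - (s m - C *ᵥ s (m+1)) := by
      intro m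
      have h := hv1 m
      rw [Matrix.sub_mulVec, Matrix.one_mulVec] at h
      linear_combination -h
    have hvM : ∀ m, (C ^ M) *ᵥ v m = (C ^ M) *ᵥ s m - (C^(M+1)) *ᵥ s (m+1) := by
      intro m
      rw [hvdef]
      simp only [matAct, Pi.sub_apply, leftShift]
      rw [Matrix.mulVec_mulVec]
      show (C ^ M * (1 - C*Cᵀ)⁻¹) *ᵥ _ = _
      rw [hCMD, Matrix.mulVec_sub, Matrix.mulVec_mulVec, ← pow_succ]
    have ht0 : ∀ n, t n = v n - Cᵀ *ᵥ (rightShift v) n := fun n => rfl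
    have hBt : ∀ n, (∑ k ∈ Finset.range (M+1), (Cᵀ^k) *ᵥ (rightShift^[k] t) n) = v n := by
      intro n
      have e1 : ∀ k ∈ Finset.range (M+1),
          (Cᵀ^k) *ᵥ (rightShift^[k] t) n =
          (Cᵀ^k) *ᵥ (rightShift^[k] v) n - (Cᵀ^(k+1)) *ᵥ (rightShift^[k+1] v) n := by
        intro k _
        rw [htdef, rightShift_iterate_sub, matAct_rightShift_iterate Cᵀ (rightShift v) k, Pi.sub_apply,
          Matrix.mulVec_sub]
        congr 1
        show (Cᵀ^k) *ᵥ (Cᵀ *ᵥ (rightShift^[k] (rightShift v)) n) = _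
        rw [Matrix.mulVec_mulVec, ← pow_succ, ← Function.iterate_succ_apply]
      rw [Finset.sum_congr rfl e1,
        Finset.sum_range_sub' (fun k => (Cᵀ^k) *ᵥ (rightShift^[k] v) n) (M+1),
        hCTN, Matrix.zero_mulVec, sub_zero]
      simp
    have hAt : ∀ n, (∑ k ∈ Finset.range (M+1), (C^k) *ᵥ t (n+k)) = s n - v n + t n := by
      intro n
      rw [Finset.sum_range_succ' (fun k => (C^k) *ᵥ t (n+k)) M]
      have e1 : ∀ k ∈ Finset.range M,
          (C^(k+1)) *ᵥ t (n+(k+1)) =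
          ((C^(k+1)) *ᵥ v (n+(k+1)) - (C^k) *ᵥ v (n+k))
          + ((C^k) *ᵥ s (n+k) - (C^(k+1)) *ᵥ s (n+(k+1))) := by
        intro k _
        have h1 : t (n+(k+1)) = v (n+(k+1)) - Cᵀ *ᵥ v (n+k) := rfl
        have h2 : (C^(k+1)) *ᵥ (Cᵀ *ᵥ v (n+k)) = (C^k) *ᵥ ((C*Cᵀ) *ᵥ v (n+k)) := by
          rw [Matrix.mulVec_mulVec, Matrix.mulVec_mulVec, pow_succ, mul_assoc]
        rw [h1, Matrix.mulVec_sub, h2, hv2, Matrix.mulVec_sub, Matrix.mulVec_sub,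
          Matrix.mulVec_mulVec, ← pow_succ]
        abel
      rw [Finset.sum_congr rfl e1, Finset.sum_add_distrib,
        Finset.sum_range_sub (fun k => (C^k) *ᵥ v (n+k)) M,
        Finset.sum_range_sub' (fun k => (C^k) *ᵥ s (n+k)) M,
        hvM, hCN]
      simp only [pow_zero, Matrix.one_mulVec, Nat.add_zero, Matrix.zero_mulVec]
      abel
    funext n
    rw [hDs t n, hAt n, hBt n]
    abel
end
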